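/- Abstract verification lemma: suppose D = (D_t) is an adapted process with D_T = e^{αG_T}, such that e^{−αX^θ_t}D_t is a submartingale for every admissible θ and a martingale for some admissible θ*. Then D_t equals the value process V_t^G = ess inf_θ E[e^{−α(∫ₜᵀ θᵀdS/S − G_T)} | 𝓖̃_t] a.s. for every t, and θ* is optimal. -/

import Mathlib

open MeasureTheory ProbabilityTheory Real


theorem stmt16_key {Ω : Type*} {mΩ : MeasurableSpace Ω} (P : Measure Ω)
    [IsProbabilityMeasure P] (α : ℝ)
    (m : MeasurableSpace Ω) (hm : m ≤ mΩ)
    (G : Ω → ℝ)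
    (Xt XT : Ω → ℝ) (hXt : StronglyMeasurable[m] Xt)
    (C : ℝ) (hC : ∀ ω, |Xt ω| ≤ C)
    (hint : Integrable (fun ω => Real.exp (-(α * (XT ω - Xt ω - G ω)))) P)
    (Dt DT : Ω → ℝ)
    (hDT : DT =ᵐ[P] fun ω => Real.exp (α * G ω)) :
    P[fun ω => Real.exp (-(α * (XT ω - Xt ω - G ω)))|m]
      =ᵐ[P] fun ω => Real.exp (α * Xt ω) *
        (P[fun ω => Real.exp (-(α * XT ω)) * DT ω|m]) ω := by
  set f : Ω → ℝ := fun ω => Real.exp (α * Xt ω) with hf_def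
  set g : Ω → ℝ := fun ω => Real.exp (-(α * XT ω)) * DT ω with hg_def
  have hf_meas : StronglyMeasurable[m] f :=
    Real.continuous_exp.comp_stronglyMeasurable (stronglyMeasurable_const.mul hXt)
  have hfg_eq : (fun ω => Real.exp (-(α * (XT ω - Xt ω - G ω)))) =ᵐ[P] f * g := by
    filter_upwards [hDT] with ω hω
    simp only [hf_def, hg_def, Pi.mul_apply, hω]
    rw [← Real.exp_add, ← Real.exp_add]
    ring_nf
  have hfg_int : Integrable (f * g) P := hint.congr hfg_eq
  have hg_int : Integrable g P := by
    have hg_eq : g =ᵐ[P]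
        fun ω => Real.exp (-(α * Xt ω)) * Real.exp (-(α * (XT ω - Xt ω - G ω))) := by
      filter_upwards [hDT] with ω hω
      simp only [hg_def, hω]
      rw [← Real.exp_add, ← Real.exp_add]
      ring_nf
    refine (Integrable.bdd_mul (c := Real.exp (|α| * C)) hint ?_ ?_).congr hg_eq.symm
    · exact ((Real.continuous_exp.comp_stronglyMeasurable
        ((stronglyMeasurable_const.mul hXt).neg)).mono hm).aestronglyMeasurable
    · refine Filter.Eventually.of_forall (fun ω => ?_)
      rw [Real.norm_eq_abs, abs_of_pos (Real.exp_pos _)]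
      apply Real.exp_le_exp.2
      calc -(α * Xt ω) ≤ |α * Xt ω| := neg_le_abs _
        _ = |α| * |Xt ω| := abs_mul _ _
        _ ≤ |α| * C := by
            exact mul_le_mul_of_nonneg_left (hC ω) (abs_nonneg _)
  calc P[fun ω => Real.exp (-(α * (XT ω - Xt ω - G ω)))|m]
      =ᵐ[P] P[f * g|m] := condExp_congr_ae hfg_eq
    _ =ᵐ[P] f * P[g|m] := condExp_mul_of_stronglyMeasurable_left hf_meas hfg_int hg_int
    _ = fun ω => Real.exp (α * Xt ω) * (P[g|m]) ω := rfl

/-- abstract verification lemma: if `D` is adapted with `D_T = e^{αG_T}`,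
`e^{-αX^θ_t}D_t` is a submartingale for every admissible `θ` (hypothesis `hsub`, stated
between each `t` and the terminal time `T`) and a martingale for some admissible `θ*`
(hypothesis `hmart`), then for every `t ∈ [0,T]` the process `D_t` is the value process
`V^G_t = ess inf_θ E[e^{-α(∫ₜᵀ θᵀdS/S − G_T)} | 𝓖̃_t]`: it is an a.s. lower bound for each
conditional payoff (with `∫ₜᵀ θᵀdS/S = X^θ_T − X^θ_t`) and the bound is attained at `θ*`,
so `θ*` is optimal. -/
theorem stmt16 {Ω Strat : Type*} {mΩ : MeasurableSpace Ω} (P : Measure Ω)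
    [IsProbabilityMeasure P] (T α : ℝ) (hT : 0 < T) (hα : 0 < α)
    (𝓖 : ℝ → MeasurableSpace Ω) (h𝓖 : ∀ t, 𝓖 t ≤ mΩ)
    (G : Ω → ℝ) (hG : Integrable (fun ω => Real.exp (α * G ω)) P)
    (A : Set Strat) (X : Strat → ℝ → Ω → ℝ)
    (hXadapt : ∀ θ ∈ A, ∀ t : ℝ, StronglyMeasurable[𝓖 t] (X θ t))
    (hXbdd : ∀ θ ∈ A, ∀ t : ℝ, ∃ C : ℝ, ∀ ω, |X θ t ω| ≤ C)
    (hXint : ∀ θ ∈ A, ∀ t : ℝ,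
      Integrable (fun ω => Real.exp (-(α * (X θ T ω - X θ t ω - G ω)))) P)
    (D : ℝ → Ω → ℝ) (hDadapt : ∀ t, StronglyMeasurable[𝓖 t] (D t))
    (hDT : D T =ᵐ[P] fun ω => Real.exp (α * G ω))
    (hsub : ∀ θ ∈ A, ∀ t ∈ Set.Icc (0:ℝ) T,
      (fun ω => Real.exp (-(α * X θ t ω)) * D t ω)
        ≤ᵐ[P] P[fun ω => Real.exp (-(α * X θ T ω)) * D T ω|𝓖 t])
    (θs : Strat) (hθs : θs ∈ A)
    (hmart : ∀ t ∈ Set.Icc (0:ℝ) T,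
      (fun ω => Real.exp (-(α * X θs t ω)) * D t ω)
        =ᵐ[P] P[fun ω => Real.exp (-(α * X θs T ω)) * D T ω|𝓖 t]) :
    ∀ t ∈ Set.Icc (0:ℝ) T,
      (∀ θ ∈ A,
        D t ≤ᵐ[P] P[fun ω => Real.exp (-(α * (X θ T ω - X θ t ω - G ω)))|𝓖 t]) ∧
        D t =ᵐ[P] P[fun ω => Real.exp (-(α * (X θs T ω - X θs t ω - G ω)))|𝓖 t] := by
  intro t ht
  constructor
  · intro θ hθ
    obtain ⟨C, hC⟩ := hXbdd θ hθ t
    have hkey := stmt16_key P α (𝓖 t) (h𝓖 t) G (X θ t) (X θ T)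
      (hXadapt θ hθ t) C hC (hXint θ hθ t) (D t) (D T) hDT
    filter_upwards [hkey, hsub θ hθ t ht] with ω h1 h2
    rw [h1]
    have : D t ω = Real.exp (α * X θ t ω) * (Real.exp (-(α * X θ t ω)) * D t ω) := by
      rw [← mul_assoc, ← Real.exp_add]; simp
    rw [this]
    exact mul_le_mul_of_nonneg_left h2 (Real.exp_pos _).le
  · obtain ⟨C, hC⟩ := hXbdd θs hθs t
    have hkey := stmt16_key P α (𝓖 t) (h𝓖 t) G (X θs t) (X θs T)
      (hXadapt θs hθs t) C hC (hXint θs hθs t) (D t) (D T) hDT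
    filter_upwards [hkey, hmart t ht] with ω h1 h2
    rw [h1, ← h2, ← mul_assoc, ← Real.exp_add]
    simp
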